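/- Let (D_λ)_{λ∈Λ} be a family of nontrivial commutative rings such that for every λ ∈ Λ and every r ∈ D_λ, either r is contained in all maximal ideals of D_λ or r is contained in only finitely many maximal ideals of D_λ. Let U be an ultrafilter in B containing an element Y = (Y_λ)_{λ∈Λ} such that Y_λ is a finite set for every λ ∈ Λ. Then (U) = {a ∈ R | S(a) ∈ U} is a maximal ideal of R = ∏_{λ∈Λ} D_λ. -/

import Mathlib

/-!
Common setup: `Λ` is an index set, `D λ` a family of commutative rings,
`R = ∏ λ, D λ` the product ring, and
`B = ∏ λ, P(max (D λ))` the product Boolean algebra of the power sets of the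
sets of maximal ideals, realized as the Pi type `∀ l, Set (MaximalSpectrum (D l))`
with its componentwise Boolean algebra structure (meet = componentwise ∩,
join = componentwise ∪, `⊥ = (∅)_λ`, complement componentwise, order = componentwise ⊆).
-/

variable {Λ : Type*} {D : Λ → Type*}

/-- `S(a) = (V(a_λ))_λ ∈ B`, where `V(x)` is the set of maximal ideals containing `x`. -/
def SFam [∀ l, CommRing (D l)] (a : ∀ l, D l) : ∀ l, Set (MaximalSpectrum (D l)) :=
  fun l => {P | a l ∈ P.asIdeal}

/-- `z(x) = {λ | x_λ = 0}`. -/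
def ZFam [∀ l, CommRing (D l)] (x : ∀ l, D l) : Set Λ := {l | x l = 0}

/-- A filter in a Boolean algebra: a nonempty subset not containing `⊥`, closed
under meets, and upward closed. -/
def IsBFilter {B : Type*} [BooleanAlgebra B] (U : Set B) : Prop :=
  U.Nonempty ∧ ⊥ ∉ U ∧ (∀ X ∈ U, ∀ Y ∈ U, X ⊓ Y ∈ U) ∧ (∀ Y ∈ U, ∀ Z, Y ≤ Z → Z ∈ U)

/-- An ultrafilter in a Boolean algebra: a filter containing `Y` or `Yᶜ` for every `Y`. -/
def IsBUltrafilter {B : Type*} [BooleanAlgebra B] (U : Set B) : Prop :=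
  IsBFilter U ∧ ∀ Y, Y ∈ U ∨ Yᶜ ∈ U

/-- Property (+): for all `r` and all nonzero `a` there is `d` lying in every maximal
ideal containing `a` but not `r`, and in no maximal ideal containing `r`. -/
def PropertyPlus (A : Type*) [CommRing A] : Prop :=
  ∀ r a : A, a ≠ 0 → ∃ d : A,
    (∀ M : Ideal A, M.IsMaximal → a ∈ M → r ∉ M → d ∈ M) ∧
    (∀ M : Ideal A, M.IsMaximal → r ∈ M → d ∉ M)

/-- Property (++): for every `r` there is `d` with `D(r) = V(d)`, i.e. the maximal
ideals containing `d` are exactly those not containing `r`. -/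
def PropertyPlusPlus (A : Type*) [CommRing A] : Prop :=
  ∀ r : A, ∃ d : A, ∀ P : MaximalSpectrum A, d ∈ P.asIdeal ↔ r ∉ P.asIdeal


theorem crt_aux {A : Type*} [CommRing A] (a : A) (F : Set (MaximalSpectrum A))
    (hF : F.Finite) (ha : ∀ P ∈ F, a ∉ P.asIdeal) :
    ∃ r : A, ∀ P ∈ F, 1 - r * a ∈ P.asIdeal := by
  refine Set.Finite.induction_on (motive := fun F _ => (∀ P ∈ F, a ∉ P.asIdeal) →
      ∃ r : A, ∀ P ∈ F, 1 - r * a ∈ P.asIdeal) _ hF (fun _ => ⟨0, fun P hP => hP.elim⟩)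
    ?_ ha
  intro P₀ F _ _ ih ha'
  obtain ⟨r, hr⟩ := ih (fun P hP => ha' P (Set.mem_insert_of_mem _ hP))
  have hP₀ : a ∉ P₀.asIdeal := ha' P₀ (Set.mem_insert _ _)
  obtain ⟨y, i, hi, hyi⟩ := P₀.2.exists_inv hP₀
  refine ⟨r + (1 - r * a) * y, fun P hP => ?_⟩
  have key : 1 - (r + (1 - r * a) * y) * a = (1 - r * a) * (1 - y * a) := by ring
  have hi' : (1 : A) - y * a = i := by linear_combination -hyi
  rcases Set.mem_insert_iff.mp hP with h | h
  · rw [key, hi', h]; exact P₀.asIdeal.mul_mem_left _ hi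
  · rw [key]; exact P.asIdeal.mul_mem_right _ (hr P h)

/-- If in every `D l` each element lies in all maximal ideals or only in finitely many,
and `U` is an ultrafilter in `B` containing an element `Y` with all components finite,
then `(U)` is a maximal ideal of `R`. -/
theorem stmt_8 [∀ l, CommRing (D l)] [∀ l, Nontrivial (D l)]
    (hfin : ∀ l, ∀ r : D l, (∀ M : Ideal (D l), M.IsMaximal → r ∈ M) ∨
      {P : MaximalSpectrum (D l) | r ∈ P.asIdeal}.Finite)
    (U : Set (∀ l, Set (MaximalSpectrum (D l)))) (hU : IsBUltrafilter U)
    (hY : ∃ Y ∈ U, ∀ l, (Y l).Finite) :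
    ∃ I : Ideal (∀ l, D l), (∀ r, r ∈ I ↔ SFam r ∈ U) ∧ I.IsMaximal := by
  obtain ⟨⟨⟨Y0, hY0⟩, hbot, hmeet, hup⟩, hult⟩ := hU
  obtain ⟨Y, hYU, hYfin⟩ := hY
  set I : Ideal (∀ l, D l) :=
    { carrier := {a | SFam a ∈ U}
      zero_mem' := by
        have h0 : SFam (0 : ∀ l, D l) = ⊤ := by
          funext l; ext P; simp [SFam]
        show SFam (0 : ∀ l, D l) ∈ U
        rw [h0]; exact hup Y0 hY0 ⊤ le_top
      add_mem' := by
        intro a b ha hb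
        exact hup _ (hmeet _ ha _ hb) _
          (fun l P hP => P.asIdeal.add_mem hP.1 hP.2)
      smul_mem' := by
        intro c a ha
        exact hup _ ha _ (fun l P hP => P.asIdeal.mul_mem_left (c l) hP) } with hI
  refine ⟨I, fun r => Iff.rfl, ?_⟩
  rw [Ideal.isMaximal_iff]
  constructor
  · show SFam (1 : ∀ l, D l) ∉ U
    have h1 : SFam (1 : ∀ l, D l) = ⊥ := by
      funext l; ext P
      simp [SFam, P.asIdeal.ne_top_iff_one.mp P.2.ne_top]
    rw [h1]; exact hbot
  · intro J x hIJ hxI hxJ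
    have hc : (SFam x)ᶜ ∈ U := (hult (SFam x)).resolve_left hxI
    choose r hr using fun l =>
      crt_aux (x l) (Y l ∩ {P : MaximalSpectrum (D l) | x l ∈ P.asIdeal}ᶜ)
        ((hYfin l).inter_of_left _) (fun P hP => hP.2)
    have h1 : (1 - r * x : ∀ l, D l) ∈ I := by
      refine hup _ (hmeet Y hYU _ hc) _ (fun l P hP => ?_)
      exact hr l P ⟨hP.1, hP.2⟩
    have := J.add_mem (hIJ h1) (J.mul_mem_left r hxJ)
    simpa using this
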